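/- For every β ∈ (0,1) there exist a compact, totally disconnected set C ⊆ [0,1] with λ₁(C) = β, a compact set B ⊆ [0,1]² with λ₂(B) = β, and a homeomorphism φ : C → B such that λ₂(φ(E)) = λ₁(E) for every Borel set E ⊆ C (a measure-preserving homeomorphism from C onto B). -/

import Mathlib

open MeasureTheory Set Filter Topology

namespace LanceThomas

/-- Interval lengths for a symmetric Cantor-type construction: at stage `n` there are
`2^n` intervals of length `ℓ n`, with total length tending to `m`. -/
structure Good (ℓ : ℕ → ℝ) (m : ℝ) : Prop where
  pos : ∀ n, 0 < ℓ n
  gap : ∀ n, 2 * ℓ (n+1) < ℓ n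
  lim : Tendsto (fun n => 2^n * ℓ n) atTop (𝓝 m)

variable {ℓ : ℕ → ℝ} {m : ℝ}

noncomputable def dd (ℓ : ℕ → ℝ) (n : ℕ) : ℝ := ℓ n - ℓ (n+1)

noncomputable def wt (ℓ : ℕ → ℝ) (x : ℕ → Bool) (n : ℕ) : ℝ := cond (x n) (dd ℓ n) 0

noncomputable def cmap (ℓ : ℕ → ℝ) (x : ℕ → Bool) : ℝ := ∑' n, wt ℓ x n

noncomputable def pSum (ℓ : ℕ → ℝ) (x : ℕ → Bool) (n : ℕ) : ℝ :=
  ∑ k ∈ Finset.range n, wt ℓ x k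

def cyl (n : ℕ) (s : ℕ → Bool) : Set (ℕ → Bool) := {x | ∀ i < n, x i = s i}

lemma Good.dd_pos (h : Good ℓ m) (n : ℕ) : 0 < dd ℓ n :=
  sub_pos.2 (lt_of_le_of_lt (by nlinarith [h.pos (n+1)]) (h.gap n))

lemma Good.lt_dd (h : Good ℓ m) (n : ℕ) : ℓ (n+1) < dd ℓ n := by
  have := h.gap n; unfold dd; linarith

lemma Good.anti (h : Good ℓ m) : ∀ n, 2^(n+1) * ℓ (n+1) < 2^n * ℓ n := by
  intro n
  have := h.gap n
  have h2 : (0:ℝ) < 2^n := by positivity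
  calc (2:ℝ)^(n+1) * ℓ (n+1) = 2^n * (2 * ℓ (n+1)) := by ring
    _ < 2^n * ℓ n := by nlinarith

lemma Good.le_weight (h : Good ℓ m) (n : ℕ) : m ≤ 2^n * ℓ n := by
  have hanti : ∀ k, 2^(n+k) * ℓ (n+k) ≤ 2^n * ℓ n := by
    intro k; induction k with
    | zero => simp
    | succ k ih => exact le_trans (le_of_lt (h.anti (n+k))) ih
  have : Tendsto (fun k => 2^(n+k) * ℓ (n+k)) atTop (𝓝 m) :=
    (h.lim.comp (tendsto_add_atTop_nat n)).congr (by intro k; simp [Nat.add_comm])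
  exact le_of_tendsto this (Eventually.of_forall hanti)

lemma Good.m_nonneg (h : Good ℓ m) : 0 ≤ m :=
  ge_of_tendsto h.lim (Eventually.of_forall fun n => by nlinarith [h.pos n, pow_pos (zero_lt_two (α := ℝ)) n])


lemma Good.weight_le (h : Good ℓ m) (n : ℕ) : 2^n * ℓ n ≤ ℓ 0 := by
  induction n with
  | zero => simp
  | succ n ih =>
    have := h.gap n
    have h2 : (0:ℝ) < 2^n := by positivity
    calc (2:ℝ)^(n+1) * ℓ (n+1) = 2^n * (2 * ℓ (n+1)) := by ring
      _ ≤ 2^n * ℓ n := by nlinarith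
      _ ≤ ℓ 0 := ih

lemma Good.le_half_pow (h : Good ℓ m) (n : ℕ) : ℓ n ≤ ℓ 0 * (1/2)^n := by
  have := h.weight_le n
  have h2 : (0:ℝ) < 2^n := by positivity
  rw [div_pow, one_pow, mul_div_assoc']
  rw [le_div_iff₀ h2]
  linarith [this]

lemma Good.tendsto_zero (h : Good ℓ m) : Tendsto ℓ atTop (𝓝 0) := by
  have hg : Tendsto (fun n => ℓ 0 * (1/2:ℝ)^n) atTop (𝓝 0) := by
    simpa using (tendsto_pow_atTop_nhds_zero_of_lt_one (by norm_num) (by norm_num : (1/2:ℝ) < 1)).const_mul (ℓ 0)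
  exact squeeze_zero (fun n => (h.pos n).le) h.le_half_pow hg

/-- the tail sums of the gaps telescope to `ℓ n` -/
lemma Good.hasSum_dd (h : Good ℓ m) (n : ℕ) : HasSum (fun k => dd ℓ (k + n)) (ℓ n) := by
  rw [hasSum_iff_tendsto_nat_of_nonneg (fun k => by
    have := h.gap (k + n); have := h.pos (k + n + 1); unfold dd; linarith)]
  have : ∀ N, ∑ i ∈ Finset.range N, dd ℓ (i + n) = ℓ n - ℓ (N + n) := by
    intro N
    have := Finset.sum_range_sub' (fun i => ℓ (i + n)) N
    simpa [dd, Nat.add_right_comm] using this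
  simp only [this]
  have : Tendsto (fun N => ℓ (N + n)) atTop (𝓝 0) :=
    h.tendsto_zero.comp (tendsto_add_atTop_nat n)
  simpa using (tendsto_const_nhds (x := ℓ n)).sub this

lemma Good.summable_dd (h : Good ℓ m) : Summable (dd ℓ) := by
  have := (h.hasSum_dd 0).summable
  simpa using this


lemma wt_nonneg (h : Good ℓ m) (x : ℕ → Bool) (n : ℕ) : 0 ≤ wt ℓ x n := by
  unfold wt; cases x n <;> simp
  · have := h.gap n; have := h.pos (n+1); unfold dd; linarith

lemma wt_le (h : Good ℓ m) (x : ℕ → Bool) (n : ℕ) : wt ℓ x n ≤ dd ℓ n := by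
  unfold wt; cases x n <;> simp
  · have := h.gap n; have := h.pos (n+1); unfold dd; linarith

lemma summable_wt (h : Good ℓ m) (x : ℕ → Bool) : Summable (wt ℓ x) :=
  Summable.of_nonneg_of_le (wt_nonneg h x) (wt_le h x) h.summable_dd



/-- the tail of the Cantor map is the Cantor map of the shifted sequence -/
lemma tail_eq (x : ℕ → Bool) (n : ℕ) :
    (∑' k, wt ℓ x (k + n)) = cmap (fun k => ℓ (k + n)) (fun k => x (k + n)) := by
  unfold cmap
  congr 1; funext k
  simp [wt, dd, Nat.add_right_comm]

lemma cmap_split (h : Good ℓ m) (x : ℕ → Bool) (n : ℕ) :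
    cmap ℓ x = pSum ℓ x n + ∑' k, wt ℓ x (k + n) := by
  unfold cmap pSum
  exact (Summable.sum_add_tsum_nat_add n (summable_wt h x)).symm

lemma tail_nonneg (h : Good ℓ m) (x : ℕ → Bool) (n : ℕ) :
    0 ≤ ∑' k, wt ℓ x (k + n) :=
  tsum_nonneg (fun k => wt_nonneg h x _)

lemma tail_le (h : Good ℓ m) (x : ℕ → Bool) (n : ℕ) :
    (∑' k, wt ℓ x (k + n)) ≤ ℓ n := by
  have h1 : Summable (fun k => wt ℓ x (k + n)) :=
    ((summable_nat_add_iff n).2 (summable_wt h x))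
  have h2 : Summable (fun k => dd ℓ (k + n)) := (h.hasSum_dd n).summable
  calc (∑' k, wt ℓ x (k + n)) ≤ ∑' k, dd ℓ (k + n) :=
        Summable.tsum_le_tsum (fun k => wt_le h x _) h1 h2
    _ = ℓ n := (h.hasSum_dd n).tsum_eq

lemma cmap_mem (h : Good ℓ m) (x : ℕ → Bool) (n : ℕ) :
    cmap ℓ x ∈ Icc (pSum ℓ x n) (pSum ℓ x n + ℓ n) := by
  rw [cmap_split h x n]
  constructor
  · linarith [tail_nonneg h x n]
  · linarith [tail_le h x n]


lemma pSum_succ (x : ℕ → Bool) (n : ℕ) :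
    pSum ℓ x (n+1) = pSum ℓ x n + wt ℓ x n := Finset.sum_range_succ _ n

lemma pSum_congr {x y : ℕ → Bool} (n : ℕ) (hxy : ∀ i < n, x i = y i) :
    pSum ℓ x n = pSum ℓ y n := by
  unfold pSum
  exact Finset.sum_congr rfl (fun k hk => by
    rw [Finset.mem_range] at hk; simp [wt, hxy k hk])

lemma cmap_le_of_false (h : Good ℓ m) {x : ℕ → Bool} {n : ℕ} (hx : x n = false) :
    cmap ℓ x ≤ pSum ℓ x n + ℓ (n+1) := by
  have h1 := (cmap_mem h x (n+1)).2
  rw [pSum_succ] at h1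
  simp [wt, hx] at h1
  linarith

lemma cmap_ge_of_true (h : Good ℓ m) {x : ℕ → Bool} {n : ℕ} (hx : x n = true) :
    pSum ℓ x n + dd ℓ n ≤ cmap ℓ x := by
  have h1 := (cmap_mem h x (n+1)).1
  rw [pSum_succ] at h1
  simp [wt, hx] at h1
  linarith

/-- key separation lemma -/
lemma cmap_sep (h : Good ℓ m) {x y : ℕ → Bool} {n : ℕ}
    (hxy : ∀ i < n, x i = y i) (hx : x n = false) (hy : y n = true) :
    cmap ℓ x + (dd ℓ n - ℓ (n+1)) ≤ cmap ℓ y := by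
  have h1 := cmap_le_of_false h hx
  have h2 := cmap_ge_of_true h hy
  rw [pSum_congr n hxy] at h1
  linarith

lemma cmap_lt (h : Good ℓ m) {x y : ℕ → Bool} {n : ℕ}
    (hxy : ∀ i < n, x i = y i) (hx : x n = false) (hy : y n = true) :
    cmap ℓ x < cmap ℓ y := by
  have := cmap_sep h hxy hx hy
  have hg := h.gap n
  have : dd ℓ n - ℓ (n+1) > 0 := by unfold dd; linarith
  linarith [cmap_sep h hxy hx hy]

lemma cmap_injective (h : Good ℓ m) : Function.Injective (cmap ℓ) := by
  intro x y hxy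
  by_contra hne
  have hex : ∃ n, x n ≠ y n := by
    by_contra hc; push_neg at hc; exact hne (funext hc)
  classical
  let n := Nat.find hex
  have hn : x n ≠ y n := Nat.find_spec hex
  have hlt : ∀ i < n, x i = y i := fun i hi => by
    by_contra hc; exact Nat.find_min hex hi hc
  cases hx : x n <;> cases hy : y n
  · exact hn (hx.trans hy.symm)
  · exact absurd hxy (ne_of_lt (cmap_lt h hlt hx hy))
  · exact absurd hxy.symm (ne_of_lt (cmap_lt h (fun i hi => (hlt i hi).symm) hy hx))
  · exact hn (hx.trans hy.symm)


lemma isOpen_cyl (n : ℕ) (s : ℕ → Bool) : IsOpen (cyl n s) := by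
  have : cyl n s = Set.pi {i | i < n} (fun i => {s i}) := by
    ext x; simp [cyl, Set.pi]
  rw [this]
  exact isOpen_set_pi (Set.finite_Iio n) (fun a _ => isOpen_discrete _)

lemma measurableSet_cyl (n : ℕ) (s : ℕ → Bool) : MeasurableSet (cyl n s) := by
  have : cyl n s = Set.pi {i | i < n} (fun i => {s i}) := by
    ext x; simp [cyl, Set.pi]
  rw [this]
  exact MeasurableSet.pi (Set.finite_Iio n).countable (fun i _ => measurableSet_singleton _)

lemma mem_cyl_self (n : ℕ) (s : ℕ → Bool) : s ∈ cyl n s := fun _ _ => rfl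

lemma cmap_continuous (h : Good ℓ m) : Continuous (cmap ℓ) := by
  rw [continuous_iff_continuousAt]
  intro x
  rw [ContinuousAt, Metric.tendsto_nhds]
  intro ε hε
  obtain ⟨n, hn⟩ : ∃ n, ℓ n < ε := ((h.tendsto_zero).eventually (gt_mem_nhds hε)).exists
  have hmem : cyl n x ∈ 𝓝 x := (isOpen_cyl n x).mem_nhds (mem_cyl_self n x)
  filter_upwards [hmem] with y hy
  have h1 := cmap_mem h y n
  have h2 := cmap_mem h x n
  rw [pSum_congr n (fun i hi => (hy i hi))] at h1
  rw [Real.dist_eq, abs_lt]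
  constructor <;> [skip; skip] <;>
    · simp only [mem_Icc] at h1 h2; linarith


/-- extend a finite digit string -/
def ext (n : ℕ) (s : Fin n → Bool) : ℕ → Bool := fun i => if h : i < n then s ⟨i, h⟩ else false

lemma pSum_ext {x : ℕ → Bool} (n : ℕ) :
    pSum ℓ x n = pSum ℓ (ext n (fun i => x i)) n :=
  pSum_congr n (fun i hi => by simp [ext, hi])

lemma range_subset_Icc (h : Good ℓ m) : Set.range (cmap ℓ) ⊆ Icc 0 (ℓ 0) := by
  rintro - ⟨x, rfl⟩
  have := cmap_mem h x 0
  simpa [pSum] using this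

lemma volume_range_le (h : Good ℓ m) :
    volume (Set.range (cmap ℓ)) ≤ ENNReal.ofReal m := by
  have key : ∀ n : ℕ, volume (Set.range (cmap ℓ)) ≤ ENNReal.ofReal (2^n * ℓ n) := by
    intro n
    have hsub : Set.range (cmap ℓ) ⊆
        ⋃ s : Fin n → Bool, Icc (pSum ℓ (ext n s) n) (pSum ℓ (ext n s) n + ℓ n) := by
      rintro - ⟨x, rfl⟩
      refine mem_iUnion.2 ⟨fun i => x i, ?_⟩
      rw [← pSum_ext n]
      exact cmap_mem h x n
    calc volume (Set.range (cmap ℓ)) ≤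
        ∑ s : Fin n → Bool, volume (Icc (pSum ℓ (ext n s) n) (pSum ℓ (ext n s) n + ℓ n)) :=
          le_trans (measure_mono hsub) (measure_iUnion_fintype_le _ _)
      _ = ∑ _s : Fin n → Bool, ENNReal.ofReal (ℓ n) := by
          refine Finset.sum_congr rfl (fun s _ => ?_)
          rw [Real.volume_Icc]; congr 1; ring
      _ = (2^n : ℕ) • ENNReal.ofReal (ℓ n) := by
          rw [Finset.sum_const]
          congr 1
          simp [Finset.card_univ]
      _ = ENNReal.ofReal (2^n * ℓ n) := by
          rw [nsmul_eq_mul, ENNReal.ofReal_mul (by positivity)]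
          congr 1
          rw [ENNReal.ofReal_pow (by norm_num)]
          norm_num
  exact ge_of_tendsto (ENNReal.tendsto_ofReal h.lim) (Eventually.of_forall key)

lemma volume_range_ge (h : Good ℓ m) :
    ENNReal.ofReal m ≤ volume (Set.range (cmap ℓ)) := by
  classical
  set G : Set ℝ := ⋃ (n : ℕ), ⋃ (s : Fin n → Bool),
      Ioo (pSum ℓ (ext n s) n + ℓ (n+1)) (pSum ℓ (ext n s) n + dd ℓ n) with hG
  -- step 1 : points of [0, ℓ 0] outside the gaps are in the range
  have hcover : Icc 0 (ℓ 0) \ G ⊆ Set.range (cmap ℓ) := by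
    rintro t ⟨htI, htG⟩
    set a : ℕ → ℝ := fun n => Nat.rec (0:ℝ)
      (fun k ak => if t < ak + dd ℓ k then ak else ak + dd ℓ k) n with ha
    set x : ℕ → Bool := fun n => if t < a n + dd ℓ n then false else true with hx
    have hstep : ∀ n, a (n+1) = if t < a n + dd ℓ n then a n else a n + dd ℓ n :=
      fun n => rfl
    have hpSum : ∀ n, pSum ℓ x n = a n := by
      intro n; induction n with
      | zero => simp [pSum]; rfl
      | succ n ih =>
        rw [pSum_succ, ih, hstep n]
        by_cases hc : t < a n + dd ℓ n
        · simp [wt, hx, hc]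
        · simp [wt, hx, hc]
    have hinv : ∀ n, a n ≤ t ∧ t ≤ a n + ℓ n := by
      intro n; induction n with
      | zero => exact ⟨by simpa [ha] using htI.1, by simpa [ha] using htI.2⟩
      | succ n ih =>
        have hgap : t ∉ Ioo (a n + ℓ (n+1)) (a n + dd ℓ n) := by
          intro hmem
          apply htG
          refine mem_iUnion.2 ⟨n, mem_iUnion.2 ⟨fun i => x i, ?_⟩⟩
          rwa [← pSum_ext n, hpSum n]
        rw [mem_Ioo, not_and_or, not_lt, not_lt] at hgap
        by_cases hc : t < a n + dd ℓ n
        · have h1 : t ≤ a n + ℓ (n+1) := by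
            rcases hgap with h' | h'
            · exact h'
            · linarith
          rw [hstep n, if_pos hc]
          exact ⟨ih.1, h1⟩
        · push_neg at hc
          rw [hstep n, if_neg (not_lt.2 hc)]
          refine ⟨hc, ?_⟩
          have : dd ℓ n + ℓ (n+1) = ℓ n := by unfold dd; ring
          linarith [ih.2]
    refine ⟨x, ?_⟩
    have hdist : ∀ n, |cmap ℓ x - t| ≤ ℓ n := by
      intro n
      have h1 := cmap_mem h x n
      rw [hpSum n] at h1
      rw [abs_le]
      constructor <;> [skip; skip] <;>
        · simp only [mem_Icc] at h1; have := hinv n; cases this; linarith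
    have : |cmap ℓ x - t| ≤ 0 :=
      ge_of_tendsto h.tendsto_zero (Eventually.of_forall hdist)
    have : cmap ℓ x = t := by
      have := abs_nonpos_iff.1 this; linarith [sub_eq_zero.1 this]
    exact this
  -- step 2 : the volume of the gaps
  have hGvol : volume G ≤ ENNReal.ofReal (ℓ 0 - m) := by
    set u : ℕ → ℝ := fun n => 2^n * ℓ n - 2^(n+1) * ℓ (n+1) with hu
    have hu_nonneg : ∀ n, 0 ≤ u n := by
      intro n
      have := h.gap n
      have h2 : (0:ℝ) < 2^n := by positivity
      simp only [hu, pow_succ]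
      nlinarith
    have hu_sum : HasSum u (ℓ 0 - m) := by
      rw [hasSum_iff_tendsto_nat_of_nonneg hu_nonneg]
      have hts : ∀ N, ∑ i ∈ Finset.range N, u i = ℓ 0 - 2^N * ℓ N := by
        intro N
        have := Finset.sum_range_sub' (fun i => 2^i * ℓ i) N
        simpa [hu] using this
      simp only [hts]
      simpa using (tendsto_const_nhds (x := ℓ 0)).sub h.lim
    calc volume G ≤ ∑' n : ℕ, volume (⋃ (s : Fin n → Bool),
          Ioo (pSum ℓ (ext n s) n + ℓ (n+1)) (pSum ℓ (ext n s) n + dd ℓ n)) :=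
            measure_iUnion_le _
      _ ≤ ∑' n : ℕ, ENNReal.ofReal (u n) := by
          refine ENNReal.tsum_le_tsum (fun n => ?_)
          calc volume (⋃ (s : Fin n → Bool),
               Ioo (pSum ℓ (ext n s) n + ℓ (n+1)) (pSum ℓ (ext n s) n + dd ℓ n))
              ≤ ∑ s : Fin n → Bool, volume
                (Ioo (pSum ℓ (ext n s) n + ℓ (n+1)) (pSum ℓ (ext n s) n + dd ℓ n)) :=
                measure_iUnion_fintype_le _ _
            _ = ∑ _s : Fin n → Bool, ENNReal.ofReal (dd ℓ n - ℓ (n+1)) := by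
                refine Finset.sum_congr rfl (fun s _ => ?_)
                rw [Real.volume_Ioo]; congr 1; ring
            _ = (2^n : ℕ) • ENNReal.ofReal (dd ℓ n - ℓ (n+1)) := by
                rw [Finset.sum_const]; congr 1; simp [Finset.card_univ]
            _ = ENNReal.ofReal (u n) := by
                rw [nsmul_eq_mul]
                have : ((2^n : ℕ) : ENNReal) = ENNReal.ofReal ((2:ℝ)^n) := by
                  rw [ENNReal.ofReal_pow (by norm_num)]; norm_num
                rw [this, ← ENNReal.ofReal_mul (by positivity)]
                congr 1
                simp only [hu]; unfold dd; ring
      _ = ENNReal.ofReal (ℓ 0 - m) := by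
          rw [← ENNReal.ofReal_tsum_of_nonneg hu_nonneg hu_sum.summable, hu_sum.tsum_eq]
  -- step 3 : combine
  have hsplit : volume (Icc (0:ℝ) (ℓ 0)) ≤ volume (Set.range (cmap ℓ)) + volume G := by
    have : Icc (0:ℝ) (ℓ 0) ⊆ Set.range (cmap ℓ) ∪ G := by
      intro t ht
      by_cases htG : t ∈ G
      · exact Or.inr htG
      · exact Or.inl (hcover ⟨ht, htG⟩)
    exact le_trans (measure_mono this) (measure_union_le _ _)
  rw [Real.volume_Icc, sub_zero] at hsplit
  have hle : volume (Set.range (cmap ℓ)) + ENNReal.ofReal (ℓ 0 - m) ≥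
      ENNReal.ofReal m + ENNReal.ofReal (ℓ 0 - m) := by
    have h1 : ENNReal.ofReal m + ENNReal.ofReal (ℓ 0 - m) = ENNReal.ofReal (ℓ 0) := by
      rw [← ENNReal.ofReal_add h.m_nonneg (by
        have := h.le_weight 0; have := h.weight_le 0; simp at this ⊢; linarith)]
      congr 1; ring
    calc ENNReal.ofReal m + ENNReal.ofReal (ℓ 0 - m) = ENNReal.ofReal (ℓ 0) := h1
      _ ≤ volume (Set.range (cmap ℓ)) + volume G := hsplit
      _ ≤ volume (Set.range (cmap ℓ)) + ENNReal.ofReal (ℓ 0 - m) := by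
          exact add_le_add_right hGvol _
  exact (ENNReal.add_le_add_iff_right ENNReal.ofReal_ne_top).1 hle

lemma volume_range (h : Good ℓ m) :
    volume (Set.range (cmap ℓ)) = ENNReal.ofReal m :=
  le_antisymm (volume_range_le h) (volume_range_ge h)


lemma Good.shift (h : Good ℓ m) (n : ℕ) : Good (fun k => ℓ (k + n)) (m / 2^n) where
  pos := fun k => h.pos (k + n)
  gap := fun k => by simpa [Nat.add_right_comm] using h.gap (k + n)
  lim := by
    have h1 : Tendsto (fun k => 2^(k+n) * ℓ (k+n)) atTop (𝓝 m) :=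
      h.lim.comp (tendsto_add_atTop_nat n)
    have h2 : Tendsto (fun k => 2^(k+n) * ℓ (k+n) / 2^n) atTop (𝓝 (m / 2^n)) :=
      h1.div_const _
    refine h2.congr (fun k => ?_)
    rw [pow_add]
    field_simp

lemma image_cyl (h : Good ℓ m) (n : ℕ) (s : ℕ → Bool) :
    cmap ℓ '' cyl n s = (fun r => pSum ℓ s n + r) '' Set.range (cmap (fun k => ℓ (k + n))) := by
  ext t
  constructor
  · rintro ⟨x, hx, rfl⟩
    refine ⟨cmap (fun k => ℓ (k + n)) (fun k => x (k + n)), ⟨_, rfl⟩, ?_⟩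
    rw [cmap_split h x n, ← tail_eq, pSum_congr n hx]
  · rintro ⟨-, ⟨z, rfl⟩, rfl⟩
    classical
    set x : ℕ → Bool := fun i => if i < n then s i else z (i - n) with hxdef
    have hxcyl : x ∈ cyl n s := fun i hi => by simp [hxdef, hi]
    have hshift : (fun k => x (k + n)) = z := by
      funext k
      simp [hxdef, Nat.add_sub_cancel]
    refine ⟨x, hxcyl, ?_⟩
    rw [cmap_split h x n, ← pSum_congr n hxcyl]
    congr 1
    rw [tail_eq, hshift]

lemma volume_image_cyl (h : Good ℓ m) (n : ℕ) (s : ℕ → Bool) :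
    volume (cmap ℓ '' cyl n s) = ENNReal.ofReal (m / 2^n) := by
  rw [image_cyl h n s]
  have himg : (fun r => pSum ℓ s n + r) '' Set.range (cmap (fun k => ℓ (k + n)))
      = (fun r => -(pSum ℓ s n) + r) ⁻¹' Set.range (cmap (fun k => ℓ (k + n))) := by
    ext y
    simp only [mem_image, mem_preimage, Set.mem_range]
    constructor
    · rintro ⟨r, hr, rfl⟩; simpa using hr
    · intro hy; exact ⟨-(pSum ℓ s n) + y, hy, by ring⟩
  rw [himg, measure_preimage_add, volume_range (h.shift n)]


def cylSets : Set (Set (ℕ → Bool)) := {S | ∃ n s, S = cyl n s}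

lemma univ_mem_cylSets : Set.univ ∈ cylSets :=
  ⟨0, fun _ => false, by ext x; simp [cyl]⟩

lemma isPiSystem_cylSets : IsPiSystem cylSets := by
  rintro - ⟨n, s, rfl⟩ - ⟨p, t, rfl⟩ hne
  obtain ⟨x, hxs, hxt⟩ := hne
  refine ⟨max n p, x, ?_⟩
  ext y
  constructor
  · rintro ⟨hys, hyt⟩ i hi
    rcases lt_or_ge i n with h | h
    · exact (hys i h).trans (hxs i h).symm
    · have hip : i < p := by
        rcases max_cases n p with ⟨hm, _⟩ | ⟨hm, _⟩ <;> omega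
      exact (hyt i hip).trans (hxt i hip).symm
  · intro hy
    constructor
    · intro i hi
      exact (hy i (lt_of_lt_of_le hi (le_max_left n p))).trans (hxs i hi)
    · intro i hi
      exact (hy i (lt_of_lt_of_le hi (le_max_right n p))).trans (hxt i hi)

lemma generateFrom_cylSets :
    (inferInstance : MeasurableSpace (ℕ → Bool)) = MeasurableSpace.generateFrom cylSets := by
  refine le_antisymm ?_ (MeasurableSpace.generateFrom_le ?_)
  · -- pi ≤ generateFrom
    have heval : ∀ i : ℕ, @Measurable _ _ (MeasurableSpace.generateFrom cylSets) _
        (fun x : ℕ → Bool => x i) := by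
      intro i
      intro u _
      have hdecomp : (fun x : ℕ → Bool => x i) ⁻¹' u = ⋃ b ∈ u,
          (fun x : ℕ → Bool => x i) ⁻¹' {b} := by
        ext x; simp
      rw [hdecomp]
      refine MeasurableSet.biUnion u.to_countable (fun b _ => ?_)
      classical
      have hcyl : (fun x : ℕ → Bool => x i) ⁻¹' {b} = ⋃ v : Fin i → Bool,
          cyl (i+1) (fun k => if h : k < i then v ⟨k, h⟩ else b) := by
        ext x
        simp only [mem_preimage, mem_singleton_iff, mem_iUnion]
        constructor
        · intro hx
          refine ⟨fun j => x j, fun k hk => ?_⟩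
          rcases lt_or_ge k i with h | h
          · simp [h]
          · have : k = i := by omega
            subst this
            simp [hx, lt_irrefl]
        · rintro ⟨v, hv⟩
          have := hv i (by omega)
          simpa using this
      rw [hcyl]
      exact MeasurableSet.iUnion (fun v =>
        MeasurableSpace.measurableSet_generateFrom ⟨i+1, _, rfl⟩)
    have hid : @Measurable (ℕ → Bool) (ℕ → Bool) (MeasurableSpace.generateFrom cylSets)
        MeasurableSpace.pi (fun x => x) := by
      exact (@measurable_pi_iff (ℕ → Bool) ℕ (fun _ => Bool)
        (MeasurableSpace.generateFrom cylSets) (fun _ => inferInstance)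
        (fun x => x)).2 heval
    exact fun S hS => hid hS
  · rintro - ⟨n, s, rfl⟩
    exact measurableSet_cyl n s


def ev (x : ℕ → Bool) : ℕ → Bool := fun k => x (2*k)
def od (x : ℕ → Bool) : ℕ → Bool := fun k => x (2*k+1)
def ilv (u v : ℕ → Bool) : ℕ → Bool := fun n => if n % 2 = 0 then u (n/2) else v (n/2)

lemma ev_ilv (u v : ℕ → Bool) : ev (ilv u v) = u := by
  funext k; simp [ev, ilv, Nat.mul_div_cancel_left, Nat.mul_mod_right]
lemma od_ilv (u v : ℕ → Bool) : od (ilv u v) = v := by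
  funext k
  have h1 : (2*k+1) % 2 = 1 := by omega
  have h2 : (2*k+1) / 2 = k := by omega
  simp [od, ilv, h1, h2]
lemma ilv_ev_od (x : ℕ → Bool) : ilv (ev x) (od x) = x := by
  funext n
  by_cases h : n % 2 = 0
  · simp only [ilv, ev, if_pos h]
    congr 1; omega
  · simp only [ilv, od, if_neg h]
    congr 1; omega

noncomputable def gmap (ℓ : ℕ → ℝ) (x : ℕ → Bool) : ℝ × ℝ := (cmap ℓ (ev x), cmap ℓ (od x))

lemma gmap_continuous (h : Good ℓ m) : Continuous (gmap ℓ) := by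
  refine Continuous.prodMk ?_ ?_ <;>
    exact (cmap_continuous h).comp (continuous_pi (fun k => continuous_apply _))

lemma gmap_injective (h : Good ℓ m) : Function.Injective (gmap ℓ) := by
  intro x y hxy
  have h1 : ev x = ev y := cmap_injective h (congrArg Prod.fst hxy)
  have h2 : od x = od y := cmap_injective h (congrArg Prod.snd hxy)
  rw [← ilv_ev_od x, ← ilv_ev_od y, h1, h2]

lemma range_gmap : Set.range (gmap ℓ) = Set.range (cmap ℓ) ×ˢ Set.range (cmap ℓ) := by
  ext ⟨a, b⟩
  simp only [Set.mem_range, Set.mem_prod]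
  constructor
  · rintro ⟨x, hx⟩
    exact ⟨⟨ev x, (congrArg Prod.fst hx : _)⟩, ⟨od x, (congrArg Prod.snd hx : _)⟩⟩
  · rintro ⟨⟨u, hu⟩, ⟨v, hv⟩⟩
    exact ⟨ilv u v, by simp [gmap, ev_ilv, od_ilv, hu, hv]⟩

lemma gmap_image_cyl (n : ℕ) (s : ℕ → Bool) :
    gmap ℓ '' cyl n s = (cmap ℓ '' cyl ((n+1)/2) (ev s)) ×ˢ (cmap ℓ '' cyl (n/2) (od s)) := by
  ext ⟨a, b⟩
  simp only [Set.mem_image, Set.mem_prod]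
  constructor
  · rintro ⟨x, hx, hab⟩
    refine ⟨⟨ev x, fun k hk => hx (2*k) (by omega), (congrArg Prod.fst hab : _)⟩,
      ⟨od x, fun k hk => hx (2*k+1) (by omega), (congrArg Prod.snd hab : _)⟩⟩
  · rintro ⟨⟨u, hu, ha⟩, ⟨v, hv, hb⟩⟩
    refine ⟨ilv u v, ?_, by simp [gmap, ev_ilv, od_ilv, ha, hb]⟩
    intro i hi
    rcases Nat.even_or_odd i with ⟨k, hk⟩ | ⟨k, hk⟩
    · have h1 : i % 2 = 0 := by omega
      have h2 : i / 2 = k := by omega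
      have := hu k (by omega)
      simp [ilv, h1, h2, this, ev]
      congr 1; omega
    · have h1 : i % 2 = 1 := by omega
      have h2 : i / 2 = k := by omega
      have := hv k (by omega)
      simp [ilv, h1, h2, this, od]
      congr 1; omega

lemma volume_gmap_image_cyl (h : Good ℓ m) (hm : 0 ≤ m) (n : ℕ) (s : ℕ → Bool) :
    volume (gmap ℓ '' cyl n s) = ENNReal.ofReal (m * m / 2^n) := by
  rw [gmap_image_cyl, Measure.volume_eq_prod, Measure.prod_prod,
    volume_image_cyl h, volume_image_cyl h,
    ← ENNReal.ofReal_mul (by positivity)]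
  congr 1
  rw [div_mul_div_comm, ← pow_add]
  congr 2
  omega


/-- between any two points of the Cantor set there is a point outside it -/
lemma exists_gap_point (h : Good ℓ m) {x y : ℕ → Bool} (hlt : cmap ℓ x < cmap ℓ y) :
    ∃ r : ℝ, cmap ℓ x < r ∧ r < cmap ℓ y ∧ r ∉ Set.range (cmap ℓ) := by
  classical
  have hxy : ∃ n, x n ≠ y n := by
    by_contra hc
    push_neg at hc
    rw [funext hc] at hlt
    exact lt_irrefl _ hlt
  set n := Nat.find hxy with hn
  have hdiff : x n ≠ y n := Nat.find_spec hxy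
  have hagree : ∀ i < n, x i = y i := fun i hi => by
    by_contra hc; exact Nat.find_min hxy hi hc
  have hx : x n = false := by
    cases hxn : x n
    · rfl
    · cases hyn : y n
      · exact absurd hlt (not_lt.2 (le_of_lt
          (cmap_lt h (fun i hi => (hagree i hi).symm) hyn hxn)))
      · exact absurd (hxn.trans hyn.symm) hdiff
  have hy : y n = true := by
    cases hyn : y n
    · exact absurd (hx.trans hyn.symm) hdiff
    · rfl
  obtain ⟨r, hr⟩ : ∃ r : ℝ, r = pSum ℓ x n + (ℓ (n+1) + dd ℓ n) / 2 := ⟨_, rfl⟩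
  have hgap := h.lt_dd n
  have h1 : cmap ℓ x < r := by
    have := cmap_le_of_false h hx
    rw [hr]; linarith
  have h2 : r < cmap ℓ y := by
    have := cmap_ge_of_true h hy
    have hr' : r = pSum ℓ y n + (ℓ (n+1) + dd ℓ n) / 2 := by
      rw [hr, pSum_congr n hagree]
    rw [hr']; linarith
  refine ⟨r, h1, h2, ?_⟩
  rintro ⟨z, hzr⟩
  by_cases hz : ∀ i < n, z i = x i
  · have hps : pSum ℓ z n = pSum ℓ x n := pSum_congr n hz
    cases hzn : z n
    · have := cmap_le_of_false h hzn
      rw [hps] at this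
      linarith
    · have := cmap_ge_of_true h hzn
      rw [hps] at this
      linarith
  · push_neg at hz
    have hzk : ∃ k, k < n ∧ z k ≠ x k := hz
    set k := Nat.find hzk with hk
    obtain ⟨hkn, hzxk⟩ := Nat.find_spec hzk
    have hzk_agree : ∀ i < k, z i = x i := fun i hi => by
      by_contra hc
      exact (Nat.find_min hzk hi) ⟨by omega, hc⟩
    have hps : pSum ℓ z k = pSum ℓ x k := pSum_congr k hzk_agree
    have hxy_k : x k = y k := hagree k hkn
    have hgapk := h.lt_dd k
    cases hzn : z k
    · -- z k = false, x k = true : cmap z < cmap x = a < r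
      have hxk : x k = true := by
        cases hxk : x k
        · exact absurd (hzn.trans hxk.symm) hzxk
        · rfl
      have hzy : cmap ℓ z < cmap ℓ x :=
        cmap_lt h (fun i hi => hzk_agree i hi) hzn hxk
      linarith
    · have hxk : x k = false := by
        cases hxk : x k
        · rfl
        · exact absurd (hzn.trans hxk.symm) hzxk
      have hyk : y k = false := hxy_k ▸ hxk
      have hzy : cmap ℓ y < cmap ℓ z := by
        refine cmap_lt h (fun i hi => ?_) hyk hzn
        exact ((hzk_agree i hi).trans (hagree i (by omega))).symm
      linarith
  
lemma totallyDisconnected_range (h : Good ℓ m) :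
    IsTotallyDisconnected (Set.range (cmap ℓ)) := by
  intro t hts htc
  intro a ha b hb
  by_contra hab
  rcases lt_or_gt_of_ne hab with hlt | hlt
  case _ =>
    obtain ⟨x, hx⟩ := hts ha
    obtain ⟨y, hy⟩ := hts hb
    obtain ⟨r, h1, h2, h3⟩ := exists_gap_point h (x := x) (y := y) (by rw [hx, hy]; exact hlt)
    rw [hx] at h1
    rw [hy] at h2
    exact h3 (hts (htc.Icc_subset ha hb ⟨le_of_lt h1, le_of_lt h2⟩))
  case _ =>
    obtain ⟨x, hx⟩ := hts ha
    obtain ⟨y, hy⟩ := hts hb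
    obtain ⟨r, h1, h2, h3⟩ := exists_gap_point h (x := y) (y := x) (by rw [hx, hy]; exact hlt)
    rw [hy] at h1
    rw [hx] at h2
    exact h3 (hts (htc.Icc_subset hb ha ⟨le_of_lt h1, le_of_lt h2⟩))


/-- the standard fat-Cantor length sequence -/
noncomputable def lenSeq (b : ℝ) : ℕ → ℝ := fun n => b / 2^n + (1-b) / 4^n

lemma lenSeq_zero (b : ℝ) : lenSeq b 0 = 1 := by simp [lenSeq]

lemma good_lenSeq {b : ℝ} (hb : b ∈ Ioo (0:ℝ) 1) : Good (lenSeq b) b where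
  pos := fun n => by
    have h2 : (0:ℝ) < 2^n := by positivity
    have h4 : (0:ℝ) < 4^n := by positivity
    have hb1 := hb.1; have hb2 := hb.2
    have h1b : (0:ℝ) < 1 - b := by linarith
    unfold lenSeq
    positivity
  gap := fun n => by
    have h2 : (0:ℝ) < 2^n := by positivity
    have h4 : (0:ℝ) < 4^n := by positivity
    have hb1 := hb.1; have hb2 := hb.2
    have hY : (0:ℝ) < (1-b)/4^n := div_pos (by linarith) h4
    unfold lenSeq
    rw [pow_succ, pow_succ]
    have ha : b/(2^n*2) = b/2^n/2 := by ring
    have hb' : (1-b)/(4^n*4) = (1-b)/4^n/4 := by ring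
    rw [ha, hb']
    linarith
  lim := by
    have key : ∀ n : ℕ, 2^n * lenSeq b n = b + (1-b) * (1/2)^n := by
      intro n
      have h2 : (0:ℝ) < 2^n := by positivity
      have h4 : (4:ℝ)^n = 2^n * 2^n := by
        rw [show (4:ℝ) = 2*2 by norm_num, mul_pow]
      unfold lenSeq
      rw [h4, one_div_pow]
      field_simp
    refine Tendsto.congr (fun n => (key n).symm) ?_
    have : Tendsto (fun n : ℕ => b + (1-b) * (1/2)^n) atTop (𝓝 (b + (1-b) * 0)) :=
      tendsto_const_nhds.add ((tendsto_pow_atTop_nhds_zero_of_lt_one (by norm_num)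
        (by norm_num : (1/2:ℝ) < 1)).const_mul _)
    simpa using this

theorem main :
    ∀ β : ℝ, β ∈ Ioo (0 : ℝ) 1 →
      ∃ (C : Set ℝ) (B : Set (ℝ × ℝ)) (φ : ℝ → ℝ × ℝ),
        C ⊆ Icc (0 : ℝ) 1 ∧
        IsCompact C ∧
        IsTotallyDisconnected C ∧
        volume C = ENNReal.ofReal β ∧
        B ⊆ Icc (0 : ℝ) 1 ×ˢ Icc (0 : ℝ) 1 ∧
        IsCompact B ∧
        volume B = ENNReal.ofReal β ∧
        ContinuousOn φ C ∧
        InjOn φ C ∧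
        φ '' C = B ∧
        ∀ E : Set ℝ, E ⊆ C → MeasurableSet E → volume (φ '' E) = volume E := by
  intro β hβ
  classical
  have hβ0 := hβ.1
  have hβ1 := hβ.2
  have hs0 : 0 < Real.sqrt β := Real.sqrt_pos.2 hβ0
  have hs1 : Real.sqrt β < 1 := by
    rw [show (1:ℝ) = Real.sqrt 1 by simp]
    exact Real.sqrt_lt_sqrt hβ0.le hβ1
  have hss : Real.sqrt β * Real.sqrt β = β := Real.mul_self_sqrt hβ0.le
  have h1 : Good (lenSeq β) β := good_lenSeq hβ
  have h2 : Good (lenSeq (Real.sqrt β)) (Real.sqrt β) := good_lenSeq ⟨hs0, hs1⟩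
  set f := cmap (lenSeq β) with hf
  set g := gmap (lenSeq (Real.sqrt β)) with hg
  have hf_cont : Continuous f := cmap_continuous h1
  have hf_inj : Function.Injective f := cmap_injective h1
  have hg_cont : Continuous g := gmap_continuous h2
  have hg_inj : Function.Injective g := gmap_injective h2
  have hfm : MeasurableEmbedding f := (hf_cont.isClosedEmbedding hf_inj).measurableEmbedding
  have hgm : MeasurableEmbedding g := (hg_cont.isClosedEmbedding hg_inj).measurableEmbedding
  set C := Set.range f with hC
  set B := Set.range g with hB
  -- the two comap measures agree
  have hν : Measure.comap f volume = Measure.comap g volume := by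
    have hfin : IsFiniteMeasure (Measure.comap f volume) := by
      constructor
      rw [hfm.comap_apply, Set.image_univ, ← hC, volume_range h1]
      exact ENNReal.ofReal_lt_top
    have hcyl_eq : ∀ S ∈ cylSets, (Measure.comap f volume) S = (Measure.comap g volume) S := by
      rintro - ⟨n, s, rfl⟩
      rw [hfm.comap_apply, hgm.comap_apply, volume_image_cyl h1,
        volume_gmap_image_cyl h2 (Real.sqrt_nonneg β), hss]
    refine MeasureTheory.ext_of_generate_finite cylSets generateFrom_cylSets
      isPiSystem_cylSets hcyl_eq ?_
    obtain ⟨n, s, hcyl⟩ := univ_mem_cylSets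
    rw [hcyl]
    exact hcyl_eq _ ⟨n, s, rfl⟩
  -- the map φ
  set φ : ℝ → ℝ × ℝ := g ∘ Function.invFun f with hφ
  have hinv : ∀ x : ℕ → Bool, Function.invFun f (f x) = x :=
    Function.leftInverse_invFun hf_inj
  have himg : ∀ E : Set ℝ, E ⊆ C → φ '' E = g '' (f ⁻¹' E) := by
    intro E hEC
    have : Function.invFun f '' E = f ⁻¹' E := by
      ext z
      constructor
      · rintro ⟨e, heE, rfl⟩
        obtain ⟨w, rfl⟩ := hEC heE
        rwa [hinv w]
      · intro hz
        exact ⟨f z, hz, hinv z⟩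
    rw [hφ, Set.image_comp, this]
  have hvol_img : ∀ E : Set ℝ, E ⊆ C → volume (φ '' E) = volume E := by
    intro E hEC
    rw [himg E hEC, ← hgm.comap_apply, ← hν, hfm.comap_apply,
      Set.image_preimage_eq_inter_range, Set.inter_eq_self_of_subset_left hEC]
  -- continuity of the inverse
  have hinvC : ContinuousOn (Function.invFun f) C := by
    rw [continuousOn_iff_continuous_restrict]
    have hemb := (hf_cont.isClosedEmbedding hf_inj).toIsEmbedding
    have hres : C.domRestrict (Function.invFun f) = hemb.toHomeomorph.symm := by
      funext y
      apply hf_inj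
      have hy : (y : ℝ) ∈ Set.range f := y.2
      obtain ⟨x, hx⟩ := hy
      rw [Set.restrict_apply, Function.invFun_eq ⟨x, hx⟩]
      have : hemb.toHomeomorph (hemb.toHomeomorph.symm y) = y :=
        hemb.toHomeomorph.apply_symm_apply y
      have hcoe : ∀ z, (hemb.toHomeomorph z : ℝ) = f z := fun z => rfl
      rw [← hcoe _, this]
    rw [hres]
    exact hemb.toHomeomorph.symm.continuous
  refine ⟨C, B, φ, ?_, ?_, ?_, ?_, ?_, ?_, ?_, ?_, ?_, ?_, ?_⟩
  · have := range_subset_Icc h1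
    rwa [lenSeq_zero] at this
  · exact isCompact_range hf_cont
  · exact totallyDisconnected_range h1
  · rw [hC, volume_range h1]
  · rw [hB, range_gmap]
    have := range_subset_Icc h2
    rw [lenSeq_zero] at this
    exact Set.prod_mono this this
  · exact isCompact_range hg_cont
  · rw [hB, range_gmap, Measure.volume_eq_prod, Measure.prod_prod, volume_range h2,
      ← ENNReal.ofReal_mul (Real.sqrt_nonneg β), hss]
  · exact hg_cont.comp_continuousOn hinvC
  · intro a ha b hb heq
    obtain ⟨x, rfl⟩ := ha
    obtain ⟨y, rfl⟩ := hb
    rw [hφ] at heq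
    simp only [Function.comp_apply, hinv] at heq
    exact congrArg f (hg_inj heq)
  · have : φ '' C = g '' (f ⁻¹' C) := himg C (le_refl _)
    rw [this, hC, Set.preimage_range, Set.image_univ, hB]
  · exact fun E hEC _ => hvol_img E hEC


end LanceThomas

open MeasureTheory Set

/-- For every `β ∈ (0,1)` there are a compact totally disconnected set `C ⊆ [0,1]` of
measure `β`, a compact set `B ⊆ [0,1]²` of measure `β`, and a measure-preserving
homeomorphism `φ` from `C` onto `B`. -/
theorem exists_measure_preserving_homeomorphism_cantor :
    ∀ β : ℝ, β ∈ Ioo (0 : ℝ) 1 →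
      ∃ (C : Set ℝ) (B : Set (ℝ × ℝ)) (φ : ℝ → ℝ × ℝ),
        C ⊆ Icc (0 : ℝ) 1 ∧
        IsCompact C ∧
        IsTotallyDisconnected C ∧
        volume C = ENNReal.ofReal β ∧
        B ⊆ Icc (0 : ℝ) 1 ×ˢ Icc (0 : ℝ) 1 ∧
        IsCompact B ∧
        volume B = ENNReal.ofReal β ∧
        ContinuousOn φ C ∧
        InjOn φ C ∧
        φ '' C = B ∧
        ∀ E : Set ℝ, E ⊆ C → MeasurableSet E → volume (φ '' E) = volume E := by
  exact LanceThomas.main
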